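/- Let π be a pair-partition of {1,...,2n} and let d ∈ ℕ. The number of functions I : {1,...,2n} → {1,...,d} satisfying both I(2k−1) = I(2k) for all 1 ≤ k ≤ n, and I(h) = I(k) whenever {h,k} is a block of s_n·π, equals d^{|π ∨ ρ_{2n}|}, where |π ∨ ρ_{2n}| is the number of blocks of the join of π with the rainbow pair-partition ρ_{2n}. -/
import Mathlib


open scoped Classical

/-- A pair-partition of `Fin m`: every equivalence class has exactly 2 elements. -/
def IsPairPartition {m : ℕ} (π : Setoid (Fin m)) : Prop :=
  ∀ i : Fin m, Nat.card {j : Fin m // π.r i j} = 2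

/-- Number of crossings of a pair-partition, counted as quadruples a<b<c<d with
a ~ c, b ~ d, ¬ a ~ b. -/
noncomputable def crossings {m : ℕ} (π : Setoid (Fin m)) : ℕ :=
  Nat.card {t : Fin m × Fin m × Fin m × Fin m //
    t.1 < t.2.1 ∧ t.2.1 < t.2.2.1 ∧ t.2.2.1 < t.2.2.2 ∧
    π.r t.1 t.2.2.1 ∧ π.r t.2.1 t.2.2.2 ∧ ¬ π.r t.1 t.2.1}

/-- Number of blocks of a partition (setoid). -/
noncomputable def numBlocks {m : ℕ} (π : Setoid (Fin m)) : ℕ :=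
  Nat.card (Quotient π)

/-- The rainbow pair-partition ρ_{2n} (0-indexed: i paired with 2n-1-i). -/
def rainbow (n : ℕ) : Setoid (Fin (2*n)) where
  r i j := i = j ∨ (i : ℕ) + (j : ℕ) = 2*n - 1
  iseqv := by
    refine ⟨fun i => Or.inl rfl, ?_, ?_⟩
    · rintro i j (rfl | h)
      · exact Or.inl rfl
      · exact Or.inr (by omega)
    · rintro i j k (rfl | h1) (h2 | h2)
      · exact Or.inl h2
      · exact Or.inr h2
      · subst h2; exact Or.inr h1
      · have hi := i.2; have hk := k.2
        exact Or.inl (Fin.ext (by omega))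

/-- The interval pair-partition { {1,2}, {3,4}, ... } (0-indexed: blocks {2k,2k+1}). -/
def intervalPP (n : ℕ) : Setoid (Fin (2*n)) where
  r i j := (i : ℕ) / 2 = (j : ℕ) / 2
  iseqv := ⟨fun _ => rfl, Eq.symm, Eq.trans⟩

/-- The labels-to-heights permutation s_n (0-indexed). -/
noncomputable def sPerm (n : ℕ) : Equiv.Perm (Fin (2*n)) :=
  Equiv.ofBijective
    (fun i => if h : (i : ℕ) < n then ⟨2*i, by have := i.2; omega⟩
              else ⟨4*n - 2*i - 1, by have := i.2; omega⟩)
    (by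
      rw [Fintype.bijective_iff_injective_and_card]
      refine ⟨?_, rfl⟩
      intro i j hij
      have hi := i.2; have hj := j.2
      apply Fin.ext
      simp only [] at hij
      split_ifs at hij <;> simp only [Fin.mk.injEq] at hij <;> omega)

/-- Blockwise action of a permutation on a partition. -/
def permAct {m : ℕ} (s : Equiv.Perm (Fin m)) (π : Setoid (Fin m)) : Setoid (Fin m) :=
  Setoid.comap s.symm π

/-- The map Φ_n : pair-partitions → tuples in {1,*}^{2n} (true = "1", false = "*"):
a point is `true` iff it is the minimum of its block of s_n · π. -/
noncomputable def PhiMap (n : ℕ) (π : Setoid (Fin (2*n))) : Fin (2*n) → Bool :=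
  fun i => @decide (∀ j, (permAct (sPerm n) π).r i j → i ≤ j) (Classical.propDecidable _)

/-- Number of positions i < h with ε i = b. -/
noncomputable def countVal {m : ℕ} (ε : Fin m → Bool) (b : Bool) (h : ℕ) : ℕ :=
  Nat.card {i : Fin m // (i : ℕ) < h ∧ ε i = b}

/-- The Dyck property for a tuple ε : {1,...,2n} → {1,*} (true = "1", false = "*"). -/
def IsDyck {n : ℕ} (ε : Fin (2*n) → Bool) : Prop :=
  (∀ h : ℕ, h ≤ 2*n → countVal ε false h ≤ countVal ε true h) ∧
  countVal ε true (2*n) = n ∧ countVal ε false (2*n) = n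

/-- The choice number Choice_ε(h). -/
noncomputable def choiceNum {n : ℕ} (ε : Fin (2*n) → Bool) (h : Fin (2*n)) : ℕ :=
  countVal ε true (h : ℕ) - countVal ε false (h : ℕ)

/-- the number of tuples I with I(2k-1)=I(2k) which are
height-compatible with π equals d^{|π ∨ ρ_{2n}|}. -/

lemma sPerm_val (n : ℕ) (i : Fin (2*n)) :
    ((sPerm n i : Fin (2*n)) : ℕ) = if (i : ℕ) < n then 2*(i:ℕ) else 4*n - 2*(i:ℕ) - 1 := by
  rw [sPerm, Equiv.ofBijective_apply]
  split_ifs <;> rfl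

lemma comap_sPerm_interval (n : ℕ) :
    Setoid.comap (sPerm n) (intervalPP n) = rainbow n := by
  apply Setoid.ext
  intro i j
  show ((sPerm n i : Fin (2*n)) : ℕ) / 2 = ((sPerm n j : Fin (2*n)) : ℕ) / 2 ↔ _
  rw [sPerm_val, sPerm_val]
  show _ ↔ i = j ∨ (i : ℕ) + (j : ℕ) = 2*n - 1
  rw [Fin.ext_iff]
  have hi := i.2; have hj := j.2
  split_ifs <;> omega
-- scratch: aux lemmas

/-- comap along an equiv commutes with sup. -/
lemma comap_sup_equiv {α β : Type*} (e : α ≃ β) (r s : Setoid β) :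
    Setoid.comap e (r ⊔ s) = Setoid.comap e r ⊔ Setoid.comap e s := by
  apply le_antisymm
  · intro x y h
    rw [Setoid.sup_def] at h
    have key : ∀ a b : β, Relation.EqvGen (fun a b => r a b ∨ s a b) a b →
        (Setoid.comap e r ⊔ Setoid.comap e s) (e.symm a) (e.symm b) := by
      intro a b hab
      induction hab with
      | rel a b hab =>
        rcases hab with hab | hab
        · exact le_sup_left (a := Setoid.comap e r) (show (Setoid.comap e r) (e.symm a) (e.symm b) by
            show r (e (e.symm a)) (e (e.symm b)); simpa using hab)
        · exact le_sup_right (a := Setoid.comap e r) (show (Setoid.comap e s) (e.symm a) (e.symm b) by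
            show s (e (e.symm a)) (e (e.symm b)); simpa using hab)
      | refl a => exact (Setoid.comap e r ⊔ Setoid.comap e s).iseqv.refl _
      | symm a b _ ih => exact (Setoid.comap e r ⊔ Setoid.comap e s).iseqv.symm ih
      | trans a b c _ _ ih1 ih2 => exact (Setoid.comap e r ⊔ Setoid.comap e s).iseqv.trans ih1 ih2
    have := key (e x) (e y) h
    simpa using this
  · apply sup_le
    · intro x y h; exact le_sup_left (a := r) (b := s) h
    · intro x y h; exact le_sup_right (a := r) (b := s) h

lemma comap_comap {α β γ : Type*} (f : α → β) (g : β → γ) (r : Setoid γ) :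
    Setoid.comap f (Setoid.comap g r) = Setoid.comap (g ∘ f) r :=
  Setoid.ext fun _ _ => Iff.rfl
lemma card_const {m : ℕ} (σ : Setoid (Fin m)) (d : ℕ) :
    Nat.card {I : Fin m → Fin d // ∀ x y, σ x y → I x = I y} = d ^ Nat.card (Quotient σ) := by
  classical
  have e : {I : Fin m → Fin d // ∀ x y, σ x y → I x = I y} ≃ (Quotient σ → Fin d) :=
    { toFun := fun I => Quotient.lift I.1 fun a b h => I.2 a b h
      invFun := fun F => ⟨fun i => F (Quotient.mk σ i), fun a b h => congrArg F (Quotient.sound h)⟩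
      left_inv := fun I => Subtype.ext rfl
      right_inv := fun F => funext fun q => Quotient.inductionOn q fun _ => rfl }
  rw [Nat.card_congr e, Nat.card_fun, Nat.card_eq_fintype_card (α := Fin d), Fintype.card_fin]

theorem stmt_5 (n d : ℕ) (π : Setoid (Fin (2*n))) (hπ : IsPairPartition π) :
    Nat.card {I : Fin (2*n) → Fin d //
      (∀ k : Fin n, I ⟨2*(k:ℕ), by have := k.2; omega⟩ = I ⟨2*(k:ℕ)+1, by have := k.2; omega⟩) ∧
      (∀ h k : Fin (2*n), (permAct (sPerm n) π).r h k → I h = I k)} =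
    d ^ numBlocks (π ⊔ rainbow n) := by
  classical
  have hiff : ∀ I : Fin (2*n) → Fin d,
      ((∀ k : Fin n, I ⟨2*(k:ℕ), by have := k.2; omega⟩ = I ⟨2*(k:ℕ)+1, by have := k.2; omega⟩) ∧
        (∀ h k : Fin (2*n), (permAct (sPerm n) π).r h k → I h = I k)) ↔
      (∀ x y, (intervalPP n ⊔ permAct (sPerm n) π) x y → I x = I y) := by
    intro I
    constructor
    · rintro ⟨h1, h2⟩
      have ha : intervalPP n ≤ Setoid.ker I := by
        intro i j hij
        show I i = I j
        have hi := i.2; have hj := j.2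
        have hij' : (i : ℕ)/2 = (j : ℕ)/2 := hij
        have hm : (i : ℕ)/2 < n := by omega
        have key := h1 ⟨(i : ℕ)/2, hm⟩
        have ei : i = ⟨2*((i:ℕ)/2), by omega⟩ ∨ i = ⟨2*((i:ℕ)/2)+1, by omega⟩ := by
          rcases (show (i:ℕ) = 2*((i:ℕ)/2) ∨ (i:ℕ) = 2*((i:ℕ)/2)+1 by omega) with h | h
          exacts [Or.inl (Fin.ext h), Or.inr (Fin.ext h)]
        have ej : j = ⟨2*((i:ℕ)/2), by omega⟩ ∨ j = ⟨2*((i:ℕ)/2)+1, by omega⟩ := by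
          rcases (show (j:ℕ) = 2*((i:ℕ)/2) ∨ (j:ℕ) = 2*((i:ℕ)/2)+1 by omega) with h | h
          exacts [Or.inl (Fin.ext h), Or.inr (Fin.ext h)]
        rcases ei with ei | ei <;> rcases ej with ej | ej
        · exact congrArg I (ei.trans ej.symm)
        · exact (congrArg I ei).trans (key.trans (congrArg I ej).symm)
        · exact (congrArg I ei).trans (key.symm.trans (congrArg I ej).symm)
        · exact congrArg I (ei.trans ej.symm)
      have hb : permAct (sPerm n) π ≤ Setoid.ker I := fun {x y} hxy => h2 x y hxy
      exact fun x y hxy => (sup_le ha hb) hxy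
    · intro hc
      refine ⟨fun k => ?_, fun h k hhk => ?_⟩
      · apply hc
        apply (le_sup_left : intervalPP n ≤ intervalPP n ⊔ permAct (sPerm n) π)
        show (2*(k:ℕ))/2 = (2*(k:ℕ)+1)/2
        omega
      · exact hc _ _ ((le_sup_right : permAct (sPerm n) π ≤ intervalPP n ⊔ permAct (sPerm n) π) hhk)
  rw [Nat.card_congr (Equiv.subtypeEquivRight hiff), card_const]
  congr 1
  unfold numBlocks
  have h1 : Setoid.comap (⇑(sPerm n).symm) (rainbow n) = intervalPP n := by
    rw [← comap_sPerm_interval, comap_comap, Equiv.self_comp_symm]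
    exact Setoid.ext fun _ _ => Iff.rfl
  have hσ : intervalPP n ⊔ permAct (sPerm n) π = Setoid.comap (⇑(sPerm n).symm) (π ⊔ rainbow n) := by
    rw [comap_sup_equiv, h1, sup_comm]
    rfl
  rw [hσ]
  exact Nat.card_congr (Quotient.congr ((sPerm n).symm) (fun a b => Iff.rfl))
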